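/- Let ℓ > 0 and λ > 0 be real numbers and c ∈ (0,1]. Define f(α) := α^{(ℓ+2)/2} − λ α^{ℓ/2} + λ c^{(ℓ+2)/ℓ} α^{−1} for α > 0, and let x* be the unique positive root of (ℓ+2) x^{(ℓ+4)/2} − ℓλ x^{(ℓ+2)/2} − 2λ c^{(ℓ+2)/ℓ} = 0. Then f is strictly decreasing on (0, x*] and strictly increasing on [x*, ∞). Consequently, the minimum of f over the interval [c^{2/ℓ}, 1] is attained uniquely at α* = min(max(x*, c^{2/ℓ}), 1). -/

import Mathlib

/-- `Φ(x) = (ℓ+2) x^{(ℓ+4)/2} - ℓλ x^{(ℓ+2)/2} - 2λ c^{(ℓ+2)/ℓ}`, proportional to the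
derivative of the one-step greedy cost `f` below. -/
noncomputable def Phi (ℓ lam c x : ℝ) : ℝ :=
  (ℓ + 2) * x ^ ((ℓ + 4) / 2) - ℓ * lam * x ^ ((ℓ + 2) / 2) - 2 * lam * c ^ ((ℓ + 2) / ℓ)

/-- The one-step greedy cost `f(α) = α^{(ℓ+2)/2} - λ α^{ℓ/2} + λ c^{(ℓ+2)/ℓ} α⁻¹`. -/
noncomputable def greedyCost (ℓ lam c α : ℝ) : ℝ :=
  α ^ ((ℓ + 2) / 2) - lam * α ^ (ℓ / 2) + lam * c ^ ((ℓ + 2) / ℓ) * α⁻¹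

lemma phi_factor (ℓ lam c x : ℝ) (hx : 0 < x) :
    Phi ℓ lam c x = x ^ ((ℓ + 2) / 2) *
        ((ℓ + 2) * x - ℓ * lam - 2 * lam * c ^ ((ℓ + 2) / ℓ) * x ^ (-((ℓ + 2) / 2))) := by
  have h2 : x ^ ((ℓ + 2) / 2) * x ^ (-((ℓ + 2) / 2)) = 1 := by
    rw [← Real.rpow_add hx]; simp
  have h1 : x ^ ((ℓ + 4) / 2) = x ^ ((ℓ + 2) / 2) * x := by
    rw [show (ℓ + 4) / 2 = (ℓ + 2) / 2 + 1 by ring, Real.rpow_add_one hx.ne']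
  rw [Phi, h1]
  linear_combination (2 * lam * c ^ ((ℓ + 2) / ℓ)) * h2

lemma hasDeriv_gc (ℓ lam c x : ℝ) (hx : 0 < x) :
    HasDerivAt (greedyCost ℓ lam c) (Phi ℓ lam c x / (2 * x ^ 2)) x := by
  have h1 : HasDerivAt (fun a : ℝ => a ^ ((ℓ + 2) / 2))
      (((ℓ + 2) / 2) * x ^ ((ℓ + 2) / 2 - 1)) x :=
    Real.hasDerivAt_rpow_const (Or.inl hx.ne')
  have h2 : HasDerivAt (fun a : ℝ => a ^ (ℓ / 2)) ((ℓ / 2) * x ^ (ℓ / 2 - 1)) x :=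
    Real.hasDerivAt_rpow_const (Or.inl hx.ne')
  have h3 : HasDerivAt (fun a : ℝ => a⁻¹) (-(x ^ 2)⁻¹) x := hasDerivAt_inv hx.ne'
  have h := (h1.sub (h2.const_mul lam)).add (h3.const_mul (lam * c ^ ((ℓ + 2) / ℓ)))
  refine h.congr_deriv ?_
  have e0 : x ^ ((ℓ + 2) / 2 - 1) = x ^ (ℓ / 2) := by
    rw [show (ℓ + 2) / 2 - 1 = ℓ / 2 by ring]
  have e1 : x ^ ((ℓ + 4) / 2) = x ^ (ℓ / 2) * x ^ 2 := by
    rw [show (ℓ + 4) / 2 = ℓ / 2 + 2 by ring, Real.rpow_add hx,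
      show ((2:ℝ)) = ((2:ℕ):ℝ) by norm_num, Real.rpow_natCast]
  have e2 : x ^ ((ℓ + 2) / 2) = x ^ (ℓ / 2) * x := by
    rw [show (ℓ + 2) / 2 = ℓ / 2 + 1 by ring, Real.rpow_add_one hx.ne']
  have e3 : x ^ (ℓ / 2 - 1) = x ^ (ℓ / 2) * x⁻¹ := by
    rw [show ℓ / 2 - 1 = ℓ / 2 + (-1) by ring, Real.rpow_add hx, Real.rpow_neg_one]
  rw [Phi, e0, e1, e2, e3]
  field_simp
  ring

/-- If `x*` is the (unique) positive root of `Φ`, then the cost `f` is strictly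
decreasing on `(0, x*]` and strictly increasing on `[x*, ∞)`; consequently the minimum
of `f` over `[c^{2/ℓ}, 1]` is attained uniquely at `α* = min(max(x*, c^{2/ℓ}), 1)`. -/
theorem greedy_cost_minimizer (ℓ lam c : ℝ) (hℓ : 0 < ℓ) (hlam : 0 < lam)
    (hc : c ∈ Set.Ioc (0 : ℝ) 1)
    (xs : ℝ) (hxs : 0 < xs) (hroot : Phi ℓ lam c xs = 0) :
    StrictAntiOn (greedyCost ℓ lam c) (Set.Ioc 0 xs) ∧
    StrictMonoOn (greedyCost ℓ lam c) (Set.Ici xs) ∧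
    ∀ α ∈ Set.Icc (c ^ (2 / ℓ)) 1,
      greedyCost ℓ lam c (min (max xs (c ^ (2 / ℓ))) 1) ≤ greedyCost ℓ lam c α ∧
      (α ≠ min (max xs (c ^ (2 / ℓ))) 1 →
        greedyCost ℓ lam c (min (max xs (c ^ (2 / ℓ))) 1) < greedyCost ℓ lam c α) := by
  obtain ⟨hc0, hc1⟩ := hc
  have hKpos : 0 < c ^ ((ℓ + 2) / ℓ) := Real.rpow_pos_of_pos hc0 _
  set K := c ^ ((ℓ + 2) / ℓ) with hKdef
  -- strict monotonicity of the factor g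
  have hgmono : ∀ x y : ℝ, 0 < x → x < y →
      (ℓ + 2) * x - ℓ * lam - 2 * lam * K * x ^ (-((ℓ + 2) / 2)) <
      (ℓ + 2) * y - ℓ * lam - 2 * lam * K * y ^ (-((ℓ + 2) / 2)) := by
    intro x y hx hxy
    have h1 : y ^ (-((ℓ + 2) / 2)) < x ^ (-((ℓ + 2) / 2)) :=
      Real.rpow_lt_rpow_of_neg hx hxy (by linarith)
    have h2 : (ℓ + 2) * x < (ℓ + 2) * y :=
      mul_lt_mul_of_pos_left hxy (by linarith)
    have h3 : 2 * lam * K * y ^ (-((ℓ + 2) / 2)) < 2 * lam * K * x ^ (-((ℓ + 2) / 2)) := by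
      have hpos : 0 < 2 * lam * K := by positivity
      exact mul_lt_mul_of_pos_left h1 hpos
    linarith
  have hgxs : (ℓ + 2) * xs - ℓ * lam - 2 * lam * K * xs ^ (-((ℓ + 2) / 2)) = 0 := by
    have hf := phi_factor ℓ lam c xs hxs
    rw [hroot] at hf
    have hpow : (0:ℝ) < xs ^ ((ℓ + 2) / 2) := Real.rpow_pos_of_pos hxs _
    rcases mul_eq_zero.mp hf.symm with h | h
    · exact absurd h hpow.ne'
    · exact h
  have hPhiNeg : ∀ x : ℝ, 0 < x → x < xs → Phi ℓ lam c x < 0 := by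
    intro x hx hlt
    rw [phi_factor ℓ lam c x hx]
    have := hgmono x xs hx hlt
    have hpow : (0:ℝ) < x ^ ((ℓ + 2) / 2) := Real.rpow_pos_of_pos hx _
    rw [hgxs] at this
    exact mul_neg_of_pos_of_neg hpow this
  have hPhiPos : ∀ x : ℝ, xs < x → 0 < Phi ℓ lam c x := by
    intro x hlt
    have hx : 0 < x := hxs.trans hlt
    rw [phi_factor ℓ lam c x hx]
    have := hgmono xs x hxs hlt
    have hpow : (0:ℝ) < x ^ ((ℓ + 2) / 2) := Real.rpow_pos_of_pos hx _
    rw [hgxs] at this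
    exact mul_pos hpow this
  -- strict antitonicity on (0, xs]
  have hanti : StrictAntiOn (greedyCost ℓ lam c) (Set.Ioc 0 xs) := by
    apply strictAntiOn_of_deriv_neg (convex_Ioc 0 xs)
    · intro x hx
      exact (hasDeriv_gc ℓ lam c x hx.1).continuousAt.continuousWithinAt
    · intro x hx
      rw [interior_Ioc] at hx
      have hx0 : 0 < x := hx.1
      rw [(hasDeriv_gc ℓ lam c x hx0).deriv]
      have h1 := hPhiNeg x hx0 hx.2
      have h2 : (0:ℝ) < 2 * x ^ 2 := by positivity
      exact div_neg_of_neg_of_pos h1 h2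
  have hmono : StrictMonoOn (greedyCost ℓ lam c) (Set.Ici xs) := by
    apply strictMonoOn_of_deriv_pos (convex_Ici xs)
    · intro x hx
      exact (hasDeriv_gc ℓ lam c x (hxs.trans_le hx)).continuousAt.continuousWithinAt
    · intro x hx
      rw [interior_Ici] at hx
      have hx0 : 0 < x := hxs.trans hx
      rw [(hasDeriv_gc ℓ lam c x hx0).deriv]
      have h1 := hPhiPos x hx
      have h2 : (0:ℝ) < 2 * x ^ 2 := by positivity
      exact div_pos h1 h2
  refine ⟨hanti, hmono, ?_⟩
  set L := c ^ (2 / ℓ) with hLdef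
  have hL0 : 0 < L := Real.rpow_pos_of_pos hc0 _
  have hL1 : L ≤ 1 := Real.rpow_le_one hc0.le hc1 (by positivity)
  set A := min (max xs L) 1 with hAdef
  have hAL : L ≤ A := le_min (le_max_right _ _) hL1
  have hA1 : A ≤ 1 := min_le_right _ _
  have hA0 : 0 < A := hL0.trans_le hAL
  rintro α ⟨hαL, hα1⟩
  have key : α ≠ A → greedyCost ℓ lam c A < greedyCost ℓ lam c α := by
    intro hne
    rcases lt_or_gt_of_ne hne with hlt | hgt
    · -- α < A : both in (0, xs]
      have hLA : L < A := lt_of_le_of_lt hαL hlt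
      have hmaxL : L < max xs L := lt_of_lt_of_le hLA (min_le_left _ _)
      have hxsL : L < xs := by
        by_contra h
        push_neg at h
        rw [max_eq_right h] at hmaxL
        exact lt_irrefl _ hmaxL
      have hAxs : A ≤ xs := le_trans (min_le_left _ _) (le_of_eq (max_eq_left hxsL.le))
      have hαmem : α ∈ Set.Ioc 0 xs := ⟨hL0.trans_le hαL, le_trans hlt.le hAxs⟩
      have hAmem : A ∈ Set.Ioc 0 xs := ⟨hA0, hAxs⟩
      exact hanti hαmem hAmem hlt
    · -- A < α : both in [xs, ∞)
      have hA1' : A < 1 := lt_of_lt_of_le hgt hα1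
      have hmax1 : max xs L < 1 := by
        by_contra h
        push_neg at h
        have hA1'' : A = 1 := min_eq_right h
        rw [hA1''] at hA1'
        exact lt_irrefl _ hA1' 
      have hAeq : A = max xs L := min_eq_left hmax1.le
      have hxsA : xs ≤ A := hAeq ▸ le_max_left _ _
      exact hmono hxsA (le_trans hxsA hgt.le) hgt
  constructor
  · by_cases h : α = A
    · rw [h]
    · exact (key h).le
  · exact key
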